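/- Under hypothesis (H), there exists C > 0 such that for all sufficiently large x ≥ 0, (1/C)·Φ'⁻¹(x) ≤ Φ*(x)/x ≤ C·Φ'⁻¹(x), where Φ'⁻¹ is the inverse of Φ' on [M, ∞) and Φ* is the Legendre transform of Φ. -/

import Mathlib

open Real

/-- Legendre–Fenchel transform of `Φ`. -/
noncomputable def legendre (Φ : ℝ → ℝ) (x : ℝ) : ℝ := ⨆ y : ℝ, (x * y - Φ y)

theorem stmt5 (Φ : ℝ → ℝ) (ε M : ℝ)
    (hΦ : ContDiff ℝ 2 Φ) (hsym : ∀ x, Φ (-x) = Φ x)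
    (hconv : ConvexOn ℝ Set.univ Φ)
    (hε : 0 < ε) (hε' : ε ≤ 1/2) (hM : 0 < M) (hΦM : 0 < Φ M)
    (hH : ∀ x ≥ M, (1 + ε) * Φ x ≤ x * deriv Φ x ∧ x * deriv Φ x ≤ (2 - ε) * Φ x)
    (hmono : StrictMonoOn (deriv Φ) (Set.Ici M)) :
    ∃ C > (0:ℝ), ∃ x₀ : ℝ, ∀ x ≥ x₀, 0 ≤ x →
      (1 / C) * Function.invFunOn (deriv Φ) (Set.Ici M) x ≤ legendre Φ x / x ∧
      legendre Φ x / x ≤ C * Function.invFunOn (deriv Φ) (Set.Ici M) x := by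
  have hdiff : ∀ y : ℝ, DifferentiableAt ℝ Φ y :=
    fun y => (hΦ.differentiable two_ne_zero).differentiableAt
  have hcont' : Continuous (deriv Φ) := hΦ.continuous_deriv one_le_two
  -- tangent line inequality
  have tangent : ∀ a b : ℝ, Φ b + deriv Φ b * (a - b) ≤ Φ a := by
    intro a b
    rcases lt_trichotomy b a with h | h | h
    · have := hconv.deriv_le_slope (Set.mem_univ b) (Set.mem_univ a) h (hdiff b)
      rw [slope_def_field] at this
      have hab : 0 < a - b := by linarith
      nlinarith [(le_div_iff₀ hab).mp this]
    · simp [h]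
    · have := hconv.slope_le_deriv (Set.mem_univ a) (Set.mem_univ b) h (hdiff b)
      rw [slope_def_field] at this
      have hab : 0 < b - a := by linarith
      nlinarith [(div_le_iff₀ hab).mp this]
  -- doubling growth
  have doubling : ∀ y ≥ M, (2 + ε) * Φ y ≤ Φ (2 * y) := by
    intro y hy
    have h1 := tangent (2 * y) y
    have h2 := (hH y hy).1
    nlinarith
  -- growth along powers of two
  have pow_growth : ∀ n : ℕ, M ≤ 2 ^ n * M ∧ (2 + ε) ^ n * Φ M ≤ Φ (2 ^ n * M) := by
    intro n
    induction n with
    | zero => simp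
    | succ n ih =>
      obtain ⟨h1, h2⟩ := ih
      constructor
      · have h2n : (2:ℝ) ^ (n + 1) * M = 2 * (2 ^ n * M) := by ring
        linarith
      · have := doubling (2 ^ n * M) h1
        have hp : (0:ℝ) < (2 + ε) ^ n := by positivity
        calc (2 + ε) ^ (n + 1) * Φ M = (2 + ε) * ((2 + ε) ^ n * Φ M) := by ring
          _ ≤ (2 + ε) * Φ (2 ^ n * M) := by nlinarith
          _ ≤ Φ (2 * (2 ^ n * M)) := this
          _ = Φ (2 ^ (n + 1) * M) := by ring_nf
  -- deriv Φ is unbounded on [M, ∞)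
  have unbdd : ∀ x : ℝ, ∃ y ≥ M, x ≤ deriv Φ y := by
    intro x
    have hr : (1:ℝ) < (2 + ε) / 2 := by
      rw [lt_div_iff₀ (by norm_num : (0:ℝ) < 2)]; linarith
    obtain ⟨n, hn⟩ := (tendsto_pow_atTop_atTop_of_one_lt hr).eventually_ge_atTop
      (x * M / ((1 + ε) * Φ M)) |>.exists
    refine ⟨2 ^ n * M, (pow_growth n).1, ?_⟩
    obtain ⟨h1, h2⟩ := pow_growth n
    have hH1 := (hH _ h1).1
    have hyn : (0:ℝ) < 2 ^ n * M := by positivity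
    have hx2 : x * M ≤ ((2 + ε) / 2) ^ n * ((1 + ε) * Φ M) := by
      rw [div_le_iff₀ (by positivity)] at hn
      linarith
    have key : (1 + ε) * ((2 + ε) ^ n * Φ M) ≤ 2 ^ n * M * deriv Φ (2 ^ n * M) := by
      nlinarith
    rw [div_pow, div_mul_eq_mul_div, le_div_iff₀ (by positivity)] at hx2
    have h2pos : (0:ℝ) < 2 ^ n := by positivity
    nlinarith
  -- main argument
  refine ⟨(1 + ε) / ε, by positivity, max (deriv Φ M) 1, ?_⟩
  intro x hx hx0
  have hx1 : (1:ℝ) ≤ x := le_trans (le_max_right _ _) hx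
  have hxM : deriv Φ M ≤ x := le_trans (le_max_left _ _) hx
  have hxpos : (0:ℝ) < x := by linarith
  -- find a preimage of x
  obtain ⟨b, hbM, hbx⟩ := unbdd x
  have hsurj : ∃ a ∈ Set.Ici M, deriv Φ a = x := by
    obtain ⟨y, hy, hyx⟩ := intermediate_value_Icc hbM hcont'.continuousOn
      (Set.mem_Icc.mpr ⟨hxM, hbx⟩)
    exact ⟨y, hy.1, hyx⟩
  set y := Function.invFunOn (deriv Φ) (Set.Ici M) x with hy_def
  have hyM : y ∈ Set.Ici M := Function.invFunOn_mem hsurj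
  have hyx : deriv Φ y = x := Function.invFunOn_eq hsurj
  have hyM' : M ≤ y := hyM
  have hypos : 0 < y := lt_of_lt_of_le hM hyM'
  -- legendre value
  have hub : ∀ z : ℝ, x * z - Φ z ≤ x * y - Φ y := by
    intro z
    have := tangent z y
    rw [hyx] at this
    linarith
  have hleg : legendre Φ x = x * y - Φ y := by
    apply le_antisymm
    · exact ciSup_le hub
    · have : BddAbove (Set.range fun z => x * z - Φ z) :=
        ⟨x * y - Φ y, Set.forall_mem_range.mpr hub⟩
      exact le_ciSup this y
    -- Φ y is positive
  have hΦ'M : 0 < deriv Φ M := by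
    have := (hH M le_rfl).1
    nlinarith
  have hΦy : 0 < Φ y := by
    have := tangent y M
    nlinarith
  have hHy := (hH y hyM').1
  rw [hyx] at hHy
  rw [hleg]
  have hC1 : (1:ℝ) ≤ (1 + ε) / ε := by
    rw [le_div_iff₀ hε]; linarith
  constructor
  · rw [one_div, le_div_iff₀ hxpos, inv_div, div_mul_eq_mul_div,
      div_mul_eq_mul_div, div_le_iff₀ (by positivity : (0:ℝ) < 1 + ε)]
    nlinarith
  · rw [div_le_iff₀ hxpos]
    nlinarith [mul_pos hypos hxpos,
      mul_le_mul_of_nonneg_right hC1 (mul_pos hypos hxpos).le]
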